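/- arXiv:1805.07630 — 7 statements merged into one kernel-verified Lean document; each statement's English description precedes it below -/
import Mathlib

section
/- The inverse limit of an inverse system of residually finite quandles is a residually finite quandle. -/
open Quandles

def ResiduallyFiniteQuandle (Q : Type*) [Quandle Q] : Prop :=
  ∀ x y : Q, x ≠ y →
    ∃ (F : Type) (_ : Quandle F) (_ : Fintype F) (φ : Q →◃ F), φ x ≠ φ y

/-- A homomorphism of racks also preserves the inverse action. -/
theorem ShelfHom.map_invAct {R S : Type*} [Rack R] [Rack S] (f : R →◃ S)
    (x y : R) : f (x ◃⁻¹ y) = f x ◃⁻¹ f y := by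
  have h : f x ◃ f (x ◃⁻¹ y) = f y := by
    rw [← ShelfHom.map_act]
    exact congrArg f (Rack.right_inv x y)
  calc f (x ◃⁻¹ y) = f x ◃⁻¹ f x ◃ f (x ◃⁻¹ y) := (Rack.invAct_act_eq _ _).symm
    _ = f x ◃⁻¹ f y := by rw [h]

/-- The inverse limit of an inverse system of quandles, as a subquandle of the
product consisting of the compatible tuples. -/
def InverseLimit.quandle {I : Type*} [Preorder I] (X : I → Type*)
    [∀ i, Quandle (X i)] (π : ∀ {i j : I}, i ≤ j → (X j →◃ X i)) :
    Quandle {x : ∀ i, X i // ∀ (i j : I) (h : i ≤ j), π h (x j) = x i} where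
  act x y := ⟨fun i => x.1 i ◃ y.1 i, by
    intro i j h
    rw [ShelfHom.map_act, x.2 i j h, y.2 i j h]⟩
  self_distrib := by
    intro x y z
    exact Subtype.ext (funext fun i => Shelf.self_distrib)
  invAct x y := ⟨fun i => x.1 i ◃⁻¹ y.1 i, by
    intro i j h
    rw [ShelfHom.map_invAct, x.2 i j h, y.2 i j h]⟩
  left_inv x y := Subtype.ext (funext fun i => Rack.left_inv (x.1 i) (y.1 i))
  right_inv x y := Subtype.ext (funext fun i => Rack.right_inv (x.1 i) (y.1 i))
  fix := by
    intro x
    exact Subtype.ext (funext fun i => Quandle.fix)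

/-- The inverse limit of an inverse system of residually finite quandles is
residually finite. -/
theorem inverseLimit_residually_finite {I : Type*} [Preorder I]
    [IsDirected I (· ≤ ·)] (X : I → Type*) [∀ i, Quandle (X i)]
    (π : ∀ {i j : I}, i ≤ j → (X j →◃ X i))
    (hid : ∀ i : I, π (le_refl i) = ShelfHom.id (X i))
    (hcomp : ∀ (i j k : I) (hij : i ≤ j) (hjk : j ≤ k),
      (π hij).comp (π hjk) = π (hij.trans hjk))
    (hrf : ∀ i, ResiduallyFiniteQuandle (X i)) :
    @ResiduallyFiniteQuandle _ (InverseLimit.quandle X π) := by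
  letI := InverseLimit.quandle X π
  intro x y hxy
  have : x.1 ≠ y.1 := fun h => hxy (Subtype.ext h)
  obtain ⟨i, hi⟩ := Function.ne_iff.mp this
  obtain ⟨F, instF, finF, φ, hφ⟩ := hrf i (x.1 i) (y.1 i) hi
  refine ⟨F, instF, finF, φ.comp ⟨fun z => z.1 i, by intro a b; rfl⟩, hφ⟩
end

section
/- If G is a residually finite group, then the conjugation quandle Conj(G) (with operation a * b = b⁻¹ a b) is a residually finite quandle. -/
open Quandles

def ResiduallyFiniteGroup (G : Type*) [Group G] : Prop :=
  ∀ g : G, g ≠ 1 →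
    ∃ (F : Type) (_ : Group F) (_ : Fintype F) (φ : G →* F), φ g ≠ 1

/-- The conjugation quandle of a residually finite group is a residually
finite quandle. -/
theorem conj_residually_finite (G : Type*) [Group G]
    (hG : ResiduallyFiniteGroup G) :
    ResiduallyFiniteQuandle (Quandle.Conj G) := by
  intro x y hxy
  obtain ⟨F, _, _, φ, hφ⟩ := hG (x * y⁻¹) (by
    intro h
    exact hxy (by rwa [mul_inv_eq_one] at h))
  refine ⟨Quandle.Conj F, inferInstance, inferInstance, Quandle.Conj.map φ, ?_⟩
  intro h
  apply hφ
  have : φ x = φ y := h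
  rw [map_mul, map_inv, this, mul_inv_cancel]
end

section
/- If G is a residually finite group, then the core quandle Core(G) (with operation a * b = b a⁻¹ b) is a residually finite quandle. -/
open Quandles

/-- The core quandle of a group: the underlying set of `G` with the operation
`a * b = b a⁻¹ b` (here written with the acting element first). -/
def Core (G : Type*) [Group G] : Type _ := G

instance Core.instGroup (G : Type*) [Group G] : Group (Core G) := ‹Group G›

instance Core.instQuandle (G : Type*) [Group G] : Quandle (Core G) where
  act x y := x * y⁻¹ * x
  self_distrib := by
    intro x y z
    group
  invAct x y := x * y⁻¹ * x
  left_inv x y := by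
    show x * (x * y⁻¹ * x)⁻¹ * x = y
    group
  right_inv x y := by
    show x * (x * y⁻¹ * x)⁻¹ * x = y
    group
  fix := by
    intro x
    show x * x⁻¹ * x = x
    group

def coreHom {G H : Type*} [Group G] [Group H] (φ : G →* H) :
    Core G →◃ Core H where
  toFun := φ
  map_act' := by
    show ∀ x y : G, φ (x * y⁻¹ * x) = φ x * (φ y)⁻¹ * φ x
    intro x y
    simp

/-- The core quandle of a residually finite group is a residually finite
quandle. -/
theorem core_residually_finite (G : Type*) [Group G]
    (hG : ResiduallyFiniteGroup G) :
    ResiduallyFiniteQuandle (Core G) := by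
  intro x y hxy
  obtain ⟨F, _, _, φ, hφ⟩ := hG (x * y⁻¹) (by
    intro h
    exact hxy (mul_inv_eq_one.mp h))
  exact ⟨Core F, inferInstance, ‹Fintype F›, coreHom φ,
    fun h => hφ (by have key : ∀ a b : G, φ a = φ b → φ (a * b⁻¹) = 1 := (fun a b h' => by rw [map_mul, map_inv, h']; simp); exact key x y h)⟩
end

section
/- Let G be a residually finite group and α : G → G an inner automorphism. Then the generalized Alexander quandle Alex(G, α), i.e., the set G with operation a * b = α(a b⁻¹) b, is residually finite. -/
open Quandles

/-- The generalized Alexander quandle of a group `G` with an automorphism `φ`: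
the underlying set of `G` with the operation `a * b = φ(a b⁻¹) b` (here
written with the acting element second, i.e. `x ◃ y = φ(y x⁻¹) x`). -/
def alexanderQuandle (G : Type*) [Group G] (φ : G ≃* G) : Quandle G where
  act x y := φ (y * x⁻¹) * x
  self_distrib := by
    intro x y z
    show φ ((φ (z * y⁻¹) * y) * x⁻¹) * x
        = φ ((φ (z * x⁻¹) * x) * (φ (y * x⁻¹) * x)⁻¹) * (φ (y * x⁻¹) * x)
    simp only [map_mul, map_inv, mul_inv_rev, inv_inv, mul_assoc, inv_mul_cancel_left,
      mul_inv_cancel_left, mul_inv_cancel, mul_one]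
  invAct x y := φ.symm (y * x⁻¹) * x
  left_inv x y := by
    show φ.symm ((φ (y * x⁻¹) * x) * x⁻¹) * x = y
    simp
  right_inv x y := by
    show φ ((φ.symm (y * x⁻¹) * x) * x⁻¹) * x = y
    simp
  fix := by
    intro x
    show φ (x * x⁻¹) * x = x
    simp

/-- If `G` is a residually finite group and `α` is an inner automorphism of
`G`, then the generalized Alexander quandle `Alex(G, α)` is residually
finite. -/
theorem alexander_residually_finite (G : Type*) [Group G]
    (hG : ResiduallyFiniteGroup G) (α : G ≃* G)
    (hα : ∃ g₀ : G, ∀ x : G, α x = g₀ * x * g₀⁻¹) :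
    @ResiduallyFiniteQuandle G (alexanderQuandle G α) := by
  obtain ⟨g₀, hg₀⟩ := hα
  intro x y hxy
  obtain ⟨F, _, _, φ, hφ⟩ := hG (x * y⁻¹) (by
    intro h; apply hxy; rw [mul_inv_eq_one] at h; exact h)
  letI qF : Quandle F := alexanderQuandle F (MulAut.conj (φ g₀))
  have hact : ∀ a b : G, φ (@Shelf.act G (alexanderQuandle G α).toRack.toShelf a b)
      = @Shelf.act F qF.toRack.toShelf (φ a) (φ b) := by
    intro a b
    show φ (α (b * a⁻¹) * a) = MulAut.conj (φ g₀) (φ b * (φ a)⁻¹) * φ a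
    rw [hg₀]
    simp [MulAut.conj_apply, mul_assoc]
  refine ⟨F, qF, ‹_›,
    @ShelfHom.mk G F (alexanderQuandle G α).toRack.toShelf qF.toRack.toShelf φ (fun {a b} => hact a b), ?_⟩
  intro h
  apply hφ
  replace h : φ x = φ y := h
  rw [map_mul, map_inv, h]
  simp
end

section
/- Let H be a subgroup of a group G and z an element of the centralizer of H in G. Then the set G/H of right cosets with operation Hx * Hy = H z⁻¹ x y⁻¹ z y is a quandle. -/
open Quandles

section Aux

variable {G : Type*} [Group G] (H : Subgroup G) (z : G)

private lemma coset_aux (hc : ∀ h ∈ (H : Set G), h * z = z * h)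
    {y y' x x' : G} (hy : y' * y⁻¹ ∈ H) (hx : x' * x⁻¹ ∈ H) :
    (z⁻¹ * x' * y'⁻¹ * z * y') * (z⁻¹ * x * y⁻¹ * z * y)⁻¹ = x' * x⁻¹ := by
  have e1 : z * (y' * y⁻¹) = (y' * y⁻¹) * z := (hc _ hy).symm
  have e2 : z * (x' * x⁻¹) = (x' * x⁻¹) * z := (hc _ hx).symm
  have e1' : y'⁻¹ * z * y' = y⁻¹ * z * y := by
    calc y'⁻¹ * z * y' = y'⁻¹ * (z * (y' * y⁻¹)) * y := by group
      _ = y'⁻¹ * ((y' * y⁻¹) * z) * y := by rw [e1]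
      _ = y⁻¹ * z * y := by group
  have e2' : z⁻¹ * ((x' * x⁻¹) * z) = x' * x⁻¹ := by
    rw [← e2]; group
  calc (z⁻¹ * x' * y'⁻¹ * z * y') * (z⁻¹ * x * y⁻¹ * z * y)⁻¹
      = z⁻¹ * x' * (y'⁻¹ * z * y') * (y⁻¹ * z * y)⁻¹ * x⁻¹ * z := by group
    _ = z⁻¹ * ((x' * x⁻¹) * z) := by rw [e1']; group
    _ = x' * x⁻¹ := e2'

/-- The candidate quandle action on right cosets. -/
def cosetAct (hc : ∀ h ∈ (H : Set G), h * z = z * h) :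
    Quotient (QuotientGroup.rightRel H) → Quotient (QuotientGroup.rightRel H) →
      Quotient (QuotientGroup.rightRel H) :=
  Quotient.map₂ (fun y x => z⁻¹ * x * y⁻¹ * z * y) (by
    intro y y' hy x x' hx
    replace hy := QuotientGroup.rightRel_apply.mp hy
    replace hx := QuotientGroup.rightRel_apply.mp hx
    refine QuotientGroup.rightRel_apply.mpr ?_
    show (z⁻¹ * x' * y'⁻¹ * z * y') * (z⁻¹ * x * y⁻¹ * z * y)⁻¹ ∈ H
    rw [coset_aux H z hc hy hx]
    exact hx)

/-- The candidate inverse action. -/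
def cosetInvAct (hc : ∀ h ∈ (H : Set G), h * z = z * h) :
    Quotient (QuotientGroup.rightRel H) → Quotient (QuotientGroup.rightRel H) →
      Quotient (QuotientGroup.rightRel H) :=
  Quotient.map₂ (fun y x => z * x * y⁻¹ * z⁻¹ * y) (by
    intro y y' hy x x' hx
    replace hy := QuotientGroup.rightRel_apply.mp hy
    replace hx := QuotientGroup.rightRel_apply.mp hx
    refine QuotientGroup.rightRel_apply.mpr ?_
    show (z * x' * y'⁻¹ * z⁻¹ * y') * (z * x * y⁻¹ * z⁻¹ * y)⁻¹ ∈ H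
    have hc' : ∀ h ∈ (H : Set G), h * z⁻¹ = z⁻¹ * h := by
      intro h hh
      have e := hc h hh
      calc h * z⁻¹ = z⁻¹ * (z * h) * z⁻¹ := by group
        _ = z⁻¹ * (h * z) * z⁻¹ := by rw [e]
        _ = z⁻¹ * h := by group
    have key := coset_aux H z⁻¹ hc' hy hx
    rw [inv_inv] at key
    rw [key]; exact hx)

end Aux

/-- If `H` is a subgroup of `G` and `z` centralizes `H`, then the set of right
cosets `G/H` carries a quandle structure with operation
`Hx * Hy = H z⁻¹ x y⁻¹ z y` (here written with the acting coset second). -/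
theorem coset_quandle_exists (G : Type*) [Group G] (H : Subgroup G) (z : G)
    (hz : z ∈ Subgroup.centralizer (H : Set G)) :
    ∃ q : Quandle (Quotient (QuotientGroup.rightRel H)),
      ∀ x y : G,
        @Shelf.act _ q.toShelf
            (Quotient.mk (QuotientGroup.rightRel H) y)
            (Quotient.mk (QuotientGroup.rightRel H) x)
          = Quotient.mk (QuotientGroup.rightRel H) (z⁻¹ * x * y⁻¹ * z * y) := by
  have hc : ∀ h ∈ (H : Set G), h * z = z * h := Subgroup.mem_centralizer_iff.mp hz
  refine ⟨{ act := cosetAct H z hc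
            invAct := cosetInvAct H z hc
            self_distrib := ?_
            left_inv := ?_
            right_inv := ?_
            fix := ?_ }, ?_⟩
  · intro a b c
    induction a using Quotient.inductionOn with | h a =>
    induction b using Quotient.inductionOn with | h b =>
    induction c using Quotient.inductionOn with | h c =>
    show Quotient.map₂ _ _ _ (Quotient.map₂ _ _ _ _) = Quotient.map₂ _ _ _ _
    simp only [cosetAct, Quotient.map₂_mk]
    apply congrArg
    group
  · intro a b
    induction a using Quotient.inductionOn with | h a =>
    induction b using Quotient.inductionOn with | h b =>
    simp only [cosetAct, cosetInvAct, Quotient.map₂_mk]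
    apply congrArg
    group
  · intro a b
    induction a using Quotient.inductionOn with | h a =>
    induction b using Quotient.inductionOn with | h b =>
    simp only [cosetAct, cosetInvAct, Quotient.map₂_mk]
    apply congrArg
    group
  · intro a
    induction a using Quotient.inductionOn with | h a =>
    simp only [cosetAct, Quotient.map₂_mk]
    apply congrArg
    group
  · intro x y
    rfl
end

section
/- Let H be a subgroup of a group G and z ∈ C_G(H). If H is finitely separable in G, then the coset quandle (G/H, z) with operation Hx * Hy = H z⁻¹ x y⁻¹ z y is a residually finite quandle. -/
open Quandles

/-- A subgroup `H` of a group `G` is finitely separable if every element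
outside `H` can be separated from `H` by a homomorphism to a finite group. -/
def FinitelySeparable {G : Type*} [Group G] (H : Subgroup G) : Prop :=
  ∀ g : G, g ∉ H →
    ∃ (F : Type) (_ : Group F) (_ : Fintype F) (φ : G →* F), φ g ∉ φ '' (H : Set G)

section Aux
variable {K : Type*} [Group K] (N : Subgroup K) (ζ : K)

/-- The coset quandle structure on right cosets, with the actor as FIRST argument:
`act u v = ζ⁻¹ * v * u⁻¹ * ζ * u`. -/
noncomputable def cosetQuandle (hζ : ζ ∈ Subgroup.centralizer (N : Set K)) :
    Quandle (Quotient (QuotientGroup.rightRel N)) := by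
  have key : ∀ u u' : K, u' * u⁻¹ ∈ N → u'⁻¹ * ζ * u' = u⁻¹ * ζ * u := by
    intro u u' h
    have hc : (u' * u⁻¹) * ζ = ζ * (u' * u⁻¹) :=
      Subgroup.mem_centralizer_iff.mp hζ _ h
    have : u' * u⁻¹ * ζ * u * u'⁻¹ = ζ * (u' * u⁻¹) * u * u'⁻¹ := by
      rw [hc]
    have h2 : u' * (u⁻¹ * ζ * u) * u'⁻¹ = ζ := by
      calc u' * (u⁻¹ * ζ * u) * u'⁻¹ = (u' * u⁻¹) * ζ * u * u'⁻¹ := by group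
        _ = ζ * (u' * u⁻¹) * u * u'⁻¹ := by rw [hc]
        _ = ζ := by group
    calc u'⁻¹ * ζ * u' = u'⁻¹ * (u' * (u⁻¹ * ζ * u) * u'⁻¹) * u' := by rw [h2]
      _ = u⁻¹ * ζ * u := by group
  have keyζ : ∀ k : K, k ∈ N → ζ⁻¹ * k * ζ ∈ N := by
    intro k hk
    have hc : k * ζ = ζ * k := Subgroup.mem_centralizer_iff.mp hζ _ hk
    have : ζ⁻¹ * k * ζ = k := by
      rw [mul_assoc, hc]; group
    rwa [this]
  refine
  { act := Quotient.lift₂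
      (fun u v => Quotient.mk (QuotientGroup.rightRel N) (ζ⁻¹ * v * (u⁻¹ * ζ * u)))
      ?_
    self_distrib := ?_
    invAct := Quotient.lift₂
      (fun u v => Quotient.mk (QuotientGroup.rightRel N) (ζ * v * (u⁻¹ * ζ⁻¹ * u)))
      ?_
    left_inv := ?_
    right_inv := ?_
    fix := ?_ }
  · intro u v u' v' hu hv
    replace hu := QuotientGroup.rightRel_apply.mp hu
    replace hv := QuotientGroup.rightRel_apply.mp hv
    show Quotient.mk _ (ζ⁻¹ * v * (u⁻¹ * ζ * u)) = Quotient.mk _ (ζ⁻¹ * v' * (u'⁻¹ * ζ * u'))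
    rw [key u u' hu]
    apply Quotient.sound
    refine QuotientGroup.rightRel_apply.mpr ?_
    have : ζ⁻¹ * v' * (u⁻¹ * ζ * u) * (ζ⁻¹ * v * (u⁻¹ * ζ * u))⁻¹
        = ζ⁻¹ * (v' * v⁻¹) * ζ := by group
    rw [this]
    exact keyζ _ hv
  · -- self_distrib
    intro a b c
    refine Quotient.inductionOn₃ a b c ?_
    intro u v w
    show Quotient.lift₂ _ _ _ _ = Quotient.lift₂ _ _ _ _
    simp only [Quotient.lift₂_mk]
    apply congrArg
    group
  · -- invAct well-defined
    intro u v u' v' hu hv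
    replace hu := QuotientGroup.rightRel_apply.mp hu
    replace hv := QuotientGroup.rightRel_apply.mp hv
    have key' : u'⁻¹ * ζ⁻¹ * u' = u⁻¹ * ζ⁻¹ * u := by
      have h1 := key u u' hu
      have h3 : (u'⁻¹ * ζ * u')⁻¹ = (u⁻¹ * ζ * u)⁻¹ := by rw [h1]
      calc u'⁻¹ * ζ⁻¹ * u' = (u'⁻¹ * ζ * u')⁻¹ := by group
        _ = (u⁻¹ * ζ * u)⁻¹ := h3
        _ = u⁻¹ * ζ⁻¹ * u := by group
    show Quotient.mk _ (ζ * v * (u⁻¹ * ζ⁻¹ * u)) = Quotient.mk _ (ζ * v' * (u'⁻¹ * ζ⁻¹ * u'))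
    rw [key']
    apply Quotient.sound
    refine QuotientGroup.rightRel_apply.mpr ?_
    have : ζ * v' * (u⁻¹ * ζ⁻¹ * u) * (ζ * v * (u⁻¹ * ζ⁻¹ * u))⁻¹
        = ζ * (v' * v⁻¹) * ζ⁻¹ := by group
    rw [this]
    have hc : (v' * v⁻¹) * ζ = ζ * (v' * v⁻¹) := Subgroup.mem_centralizer_iff.mp hζ _ hv
    have h4 : ζ * (v' * v⁻¹) * ζ⁻¹ = v' * v⁻¹ := by rw [← hc]; group
    rwa [h4]
  · intro a b
    refine Quotient.inductionOn₂ a b ?_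
    intro u v
    simp only [Quotient.lift₂_mk]
    apply congrArg
    group
  · intro a b
    refine Quotient.inductionOn₂ a b ?_
    intro u v
    simp only [Quotient.lift₂_mk]
    apply congrArg
    group
  · intro a
    refine Quotient.inductionOn a ?_
    intro u
    simp only [Quotient.lift₂_mk]
    apply congrArg
    group

end Aux

/-- If `H` is a finitely separable subgroup of `G` and `z` centralizes `H`,
then the coset quandle `(G/H, z)`, i.e. the set of right cosets with operation
`Hx * Hy = H z⁻¹ x y⁻¹ z y` (written here with the acting coset second), is a
residually finite quandle. -/
theorem coset_quandle_residually_finite (G : Type*) [Group G] (H : Subgroup G)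
    (z : G) (hz : z ∈ Subgroup.centralizer (H : Set G))
    (hsep : FinitelySeparable H)
    (q : Quandle (Quotient (QuotientGroup.rightRel H)))
    (hq : ∀ x y : G,
      @Shelf.act _ q.toShelf
          (Quotient.mk (QuotientGroup.rightRel H) y)
          (Quotient.mk (QuotientGroup.rightRel H) x)
        = Quotient.mk (QuotientGroup.rightRel H) (z⁻¹ * x * y⁻¹ * z * y)) :
    @ResiduallyFiniteQuandle _ q := by
  intro x y hxy
  obtain ⟨a, rfl⟩ := Quotient.exists_rep x
  obtain ⟨b, rfl⟩ := Quotient.exists_rep y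
  have hba : b * a⁻¹ ∉ H := by
    intro h
    exact hxy (Quotient.sound (QuotientGroup.rightRel_apply.mpr h))
  obtain ⟨F, _, _, φ, hφ⟩ := hsep _ hba
  set N : Subgroup F := H.map φ with hN
  have hζ : φ z ∈ Subgroup.centralizer (N : Set F) := by
    refine Subgroup.mem_centralizer_iff.mpr ?_
    rintro _ ⟨h, hh, rfl⟩
    rw [← map_mul, ← map_mul, Subgroup.mem_centralizer_iff.mp hz _ hh]
  letI qF : Quandle (Quotient (QuotientGroup.rightRel N)) := cosetQuandle N (φ z) hζ
  haveI : Fintype (Quotient (QuotientGroup.rightRel N)) := by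
    classical exact Quotient.fintype _
  refine ⟨Quotient (QuotientGroup.rightRel N), qF, inferInstance, ?_, ?_⟩
  · refine ⟨Quotient.lift (fun g => Quotient.mk (QuotientGroup.rightRel N) (φ g)) ?_, ?_⟩
    · intro c d hcd
      replace hcd := QuotientGroup.rightRel_apply.mp hcd
      apply Quotient.sound
      refine QuotientGroup.rightRel_apply.mpr ?_
      have : φ d * (φ c)⁻¹ = φ (d * c⁻¹) := by rw [map_mul, map_inv]
      rw [this]
      exact ⟨_, hcd, rfl⟩
    · intro u v
      obtain ⟨c, rfl⟩ := Quotient.exists_rep u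
      obtain ⟨d, rfl⟩ := Quotient.exists_rep v
      show Quotient.lift _ _ (Shelf.act (Quotient.mk _ c) (Quotient.mk _ d)) = _
      rw [hq d c]
      show Quotient.mk _ (φ (z⁻¹ * d * c⁻¹ * z * c))
          = Shelf.act (Quotient.mk _ (φ c)) (Quotient.mk _ (φ d))
      show _ = Quotient.mk _ ((φ z)⁻¹ * φ d * ((φ c)⁻¹ * φ z * φ c))
      apply congrArg
      simp only [map_mul, map_inv]
      group
  · intro heq
    have h2 : φ b * (φ a)⁻¹ ∈ N := QuotientGroup.rightRel_apply.mp (Quotient.exact heq)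
    obtain ⟨h, hh, hφh⟩ := h2
    apply hφ
    refine ⟨h, hh, ?_⟩
    rw [hφh, map_mul, map_inv]
end

section
/- Let X be a residually finite quandle and α an automorphism of X whose fixed-point set Fix(α) = {x ∈ X : α(x) = x} is non-empty. Then Fix(α) is a finitely separable subquandle of X: for each x ∈ X \ Fix(α) there is a finite quandle F and a quandle homomorphism φ : X → F with φ(x) ∉ φ(Fix(α)). -/
open Quandles

/-- Product of two quandles. -/
instance prodQuandle (A B : Type*) [Quandle A] [Quandle B] : Quandle (A × B) where
  act p q := (p.1 ◃ q.1, p.2 ◃ q.2)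
  self_distrib := by
    intro x y z
    exact Prod.ext Shelf.self_distrib Shelf.self_distrib
  invAct p q := (p.1 ◃⁻¹ q.1, p.2 ◃⁻¹ q.2)
  left_inv p q := by simp [Rack.left_inv p.1 q.1, Rack.left_inv p.2 q.2]
  right_inv p q := by simp [Rack.right_inv p.1 q.1, Rack.right_inv p.2 q.2]
  fix := by intro p; simp [Quandle.fix]

/-- If `X` is a residually finite quandle and `α` is a quandle automorphism of
`X` with non-empty fixed-point set, then `Fix(α)` is a finitely separable
subquandle of `X`: every element outside `Fix(α)` can be separated from it by
a quandle homomorphism into a finite quandle. -/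
theorem fix_finitely_separable (X : Type*) [Quandle X]
    (hX : ResiduallyFiniteQuandle X) (α : X ≃ X)
    (hα : ∀ x y : X, α (x ◃ y) = α x ◃ α y)
    (hfix : {x : X | α x = x}.Nonempty) :
    ∀ x : X, x ∉ {x : X | α x = x} →
      ∃ (F : Type) (_ : Quandle F) (_ : Fintype F) (φ : X →◃ F),
        φ x ∉ φ '' {x : X | α x = x} := by
  intro x hx
  have hne : x ≠ α x := fun h => hx h.symm
  obtain ⟨F, _, _, φ, hφ⟩ := hX x (α x) hne
  refine ⟨F × F, inferInstance, inferInstance,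
    { toFun := fun z => (φ z, φ (α z)),
      map_act' := by
        intro a b
        simp [Shelf.act, hα, φ.map_act'] }, ?_⟩
  rintro ⟨y, hy, hxy⟩
  have h1 : φ y = φ x := congrArg Prod.fst hxy
  have h2 : φ (α y) = φ (α x) := congrArg Prod.snd hxy
  rw [hy] at h2
  exact hφ (h1 ▸ h2)
end
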